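/- arXiv:2412.04586 — 4 statements merged into one kernel-verified Lean document; each statement's English description precedes it below -/
import Mathlib

section
/- Let n ≥ 1 and k ≥ 0 be integers and x > 0. Then ψ(x)·P''_{n,k}(x) = T_{n,k}(x)·P_{n,k}(x), where P''_{n,k} is the second derivative of P_{n,k}. -/
open MeasureTheory Filter Set

/-- Baskakov basis functions `P_{n,k}(x)`, with `P_{n,k} := 0` for `k < 0`. -/
noncomputable def P (n : ℕ) (k : ℤ) (x : ℝ) : ℝ :=
  if k < 0 then 0
  else (Nat.choose (n + k.toNat - 1) k.toNat : ℝ) * x ^ k.toNat * (1 + x) ^ (-(n : ℤ) - k)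

/-- The weight `ψ(x) = x(1+x)`. -/
noncomputable def psi (x : ℝ) : ℝ := x * (1 + x)

/-- The differential operator `D̃ f = ψ f''`. -/
noncomputable def Dt (f : ℝ → ℝ) : ℝ → ℝ := fun x => psi x * deriv (deriv f) x

/-- The functionals `v_{n,k}`. -/
noncomputable def v (n k : ℕ) (f : ℝ → ℝ) : ℝ :=
  if k = 0 then f 0
  else ((n : ℝ) + 1) * ∫ t in Set.Ioi (0 : ℝ), P (n + 2) ((k : ℤ) - 1) t * f t

/-- The Goodman–Sharma–Baskakov operator `V_n`. -/
noncomputable def V (n : ℕ) (f : ℝ → ℝ) (x : ℝ) : ℝ :=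
  ∑' k : ℕ, v n k f * P n (k : ℤ) x

/-- The modified operator `Ṽ_n`. -/
noncomputable def Vt (n : ℕ) (f : ℝ → ℝ) (x : ℝ) : ℝ :=
  ∑' k : ℕ, v n k f * (P n (k : ℤ) x - (1 / (n : ℝ)) * Dt (P n (k : ℤ)) x)

/-- Supremum norm on `[0,∞)`. -/
noncomputable def supNorm (f : ℝ → ℝ) : ℝ := ⨆ x ∈ Set.Ici (0 : ℝ), |f x|

/-- `f` is bounded and continuous on `[0,∞)`. -/
def BddContOn (f : ℝ → ℝ) : Prop :=
  ContinuousOn f (Set.Ici 0) ∧ ∃ M, ∀ x ∈ Set.Ici (0 : ℝ), |f x| ≤ M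

/-- The space `W²(ψ)`: `g, g'` (locally) differentiable on `(0,∞)` and `D̃ g` bounded. -/
def MemW2 (g : ℝ → ℝ) : Prop :=
  DifferentiableOn ℝ g (Set.Ioi 0) ∧ DifferentiableOn ℝ (deriv g) (Set.Ioi 0) ∧
    ∃ M, ∀ x ∈ Set.Ioi (0 : ℝ), |Dt g x| ≤ M

/-- The space `W²₀(ψ)`: members of `W²(ψ)` with `D̃ g(x) → 0` as `x → 0⁺`. -/
def MemW20 (g : ℝ → ℝ) : Prop :=
  MemW2 g ∧ Filter.Tendsto (Dt g) (nhdsWithin 0 (Set.Ioi 0)) (nhds 0)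

/-- The K-functional `K(f,t)`. -/
noncomputable def Kfun (f : ℝ → ℝ) (t : ℝ) : ℝ :=
  sInf {a : ℝ | ∃ g : ℝ → ℝ, MemW20 g ∧ MemW2 (Dt g) ∧
    a = supNorm (fun x => f x - g x) + t * supNorm (Dt (Dt g))}

/-- The function `T_{n,k}(x)`. -/
noncomputable def T (n : ℕ) (k : ℤ) (x : ℝ) : ℝ :=
  (k : ℝ) * ((k : ℝ) - 1) * (1 + x) / x - 2 * (k : ℝ) * ((n : ℝ) + (k : ℝ))
    + ((n : ℝ) + (k : ℝ)) * ((n : ℝ) + (k : ℝ) + 1) * x / (1 + x)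
theorem Dt_P_eq_T_mul_P (n : ℕ) (hn : 1 ≤ n) (k : ℕ) (x : ℝ) (hx : 0 < x) :
    psi x * deriv (deriv (P n (k : ℤ))) x = T n (k : ℤ) x * P n (k : ℤ) x := by
  set m : ℤ := -(n : ℤ) - k with hm
  set c : ℝ := (Nat.choose (n + k - 1) k : ℝ) with hc
  have hP : P n (k : ℤ) = fun y : ℝ => c * (y ^ (k : ℤ) * (1 + y) ^ m) := by
    funext y
    rw [P, if_neg (not_lt.2 (Int.natCast_nonneg k))]
    simp only [Int.toNat_natCast, zpow_natCast, ← hm, ← hc]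
    ring
  have h1y : ∀ y : ℝ, 0 < y → (1 : ℝ) + y ≠ 0 := fun y hy => by positivity
  have hD1 : ∀ y : ℝ, 0 < y → HasDerivAt (P n (k : ℤ))
      (c * (((k : ℤ) : ℝ) * y ^ ((k : ℤ) - 1) * (1 + y) ^ m
        + y ^ (k : ℤ) * (((m : ℤ) : ℝ) * (1 + y) ^ (m - 1)))) y := by
    intro y hy
    rw [hP]
    have ha := hasDerivAt_zpow (k : ℤ) y (Or.inl hy.ne')
    have hb : HasDerivAt (fun y : ℝ => (1 + y) ^ m)
        (((m : ℤ) : ℝ) * (1 + y) ^ (m - 1) * 1) y :=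
      (hasDerivAt_zpow m (1 + y) (Or.inl (h1y y hy))).comp y
        ((hasDerivAt_id y).const_add 1)
    have h := (ha.fun_mul hb).const_mul c
    exact h.congr_deriv (by ring)
  have hderiv1 : deriv (P n (k : ℤ)) =ᶠ[nhds x] fun y : ℝ =>
      c * (((k : ℤ) : ℝ) * y ^ ((k : ℤ) - 1) * (1 + y) ^ m
        + y ^ (k : ℤ) * (((m : ℤ) : ℝ) * (1 + y) ^ (m - 1))) := by
    filter_upwards [Ioi_mem_nhds hx] with y hy
    exact (hD1 y hy).deriv
  rw [hderiv1.deriv_eq]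
  have h1x : (1 : ℝ) + x ≠ 0 := h1y x hx
  have hb1 : HasDerivAt (fun y : ℝ => (1 + y) ^ m)
      (((m : ℤ) : ℝ) * (1 + x) ^ (m - 1) * 1) x :=
    (hasDerivAt_zpow m (1 + x) (Or.inl h1x)).comp x
      ((hasDerivAt_id x).const_add 1)
  have hb2 : HasDerivAt (fun y : ℝ => (1 + y) ^ (m - 1))
      (((m - 1 : ℤ) : ℝ) * (1 + x) ^ (m - 1 - 1) * 1) x :=
    (hasDerivAt_zpow (m - 1) (1 + x) (Or.inl h1x)).comp x
      ((hasDerivAt_id x).const_add 1)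
  have hA := ((hasDerivAt_zpow ((k : ℤ) - 1) x (Or.inl hx.ne')).const_mul
      (((k : ℤ) : ℝ))).fun_mul hb1
  have hB := (hasDerivAt_zpow (k : ℤ) x (Or.inl hx.ne')).fun_mul
      (hb2.const_mul (((m : ℤ) : ℝ)))
  rw [((hA.fun_add hB).const_mul c).deriv]
  have ex1 : x ^ ((k : ℤ) - 1) = x ^ ((k : ℤ) - 2) * x := by
    rw [show (k : ℤ) - 1 = (k : ℤ) - 2 + 1 by ring, zpow_add_one₀ hx.ne']
  have ex0 : x ^ (k : ℤ) = x ^ ((k : ℤ) - 2) * x * x := by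
    rw [show (k : ℤ) = (k : ℤ) - 2 + 1 + 1 by ring, zpow_add_one₀ hx.ne',
      zpow_add_one₀ hx.ne']
    congr 2
    ring
  have ex2 : x ^ ((k : ℤ) - 1 - 1) = x ^ ((k : ℤ) - 2) := by
    rw [show (k : ℤ) - 1 - 1 = (k : ℤ) - 2 by ring]
  have em1 : (1 + x) ^ (m - 1) = (1 + x) ^ (m - 2) * (1 + x) := by
    rw [show m - 1 = m - 2 + 1 by ring, zpow_add_one₀ h1x]
  have em0 : (1 + x) ^ m = (1 + x) ^ (m - 2) * (1 + x) * (1 + x) := by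
    rw [show m = m - 2 + 1 + 1 by ring, zpow_add_one₀ h1x, zpow_add_one₀ h1x]
    congr 2
    ring
  have em2 : (1 + x) ^ (m - 1 - 1) = (1 + x) ^ (m - 2) := by
    rw [show m - 1 - 1 = m - 2 by ring]
  rw [hP]
  simp only [ex1, ex0, ex2, em1, em0, em2, T, psi, hm]
  push_cast
  field_simp
  have e1 : (1 + x) ^ (-(n : ℤ) - k - 1) = (1 + x) ^ (-(n : ℤ) - k) / (1 + x) :=
    zpow_sub_one₀ h1x _
  have e2 : (1 + x) ^ (-(n : ℤ) - k - 1 - 1) = (1 + x) ^ (-(n : ℤ) - k) / (1 + x) ^ 2 := by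
    rw [zpow_sub_one₀ h1x, zpow_sub_one₀ h1x, mul_assoc, ← mul_inv, ← sq, div_eq_mul_inv]
  rw [e2, e1]
  field_simp
  ring
end

section
/- Let n ≥ 1 be an integer, x > 0, and α ∈ ℝ. Then Σ_{k=0}^∞ (α − T_{n,k}(x)/n)² · P_{n,k}(x) = α² + 2 + 2/n. -/
open MeasureTheory Filter Set

lemma P_step (n : ℕ) (x : ℝ) (k : ℤ) :
    (k : ℝ) * P n k x = (n : ℝ) * x * P (n + 1) (k - 1) x := by
  rcases lt_trichotomy k 0 with hk | hk | hk
  · rw [P, if_pos hk, P, if_pos (by omega)]; ring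
  · subst hk; simp [P]
  · rw [P, if_neg (by omega), P, if_neg (by omega)]
    obtain ⟨j, rfl⟩ : ∃ j : ℕ, k = (j : ℤ) := ⟨k.toNat, by omega⟩
    have hj : 1 ≤ j := by exact_mod_cast hk
    have h1 : ((j : ℤ)).toNat = j := Int.toNat_natCast j
    have h2 : ((j : ℤ) - 1).toNat = j - 1 := by omega
    rw [h1, h2]
    have hch : (n + j - 1).choose j * j = (n + j - 1).choose (j - 1) * n := by
      have h := Nat.choose_succ_right_eq (n + j - 1) (j - 1)
      rw [show j - 1 + 1 = j by omega, show n + j - 1 - (j - 1) = n by omega] at h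
      exact h
    have hcR : (j : ℝ) * ((n + j - 1).choose j : ℝ)
        = ((n + 1 + (j - 1) - 1).choose (j - 1) : ℝ) * (n : ℝ) := by
      rw [show n + 1 + (j - 1) - 1 = n + j - 1 by omega]
      exact_mod_cast (by rw [mul_comm]; exact_mod_cast hch :
        ((j * (n + j - 1).choose j : ℕ) : ℝ) = (((n + j - 1).choose (j - 1) * n : ℕ) : ℝ))
    rw [show (-(↑(n + 1) : ℤ) - ((j : ℤ) - 1)) = -(n : ℤ) - (j : ℤ) by push_cast; ring]
    have hxj : x ^ j = x ^ (j - 1) * x := by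
      rw [← pow_succ]; congr 1; omega
    rw [hxj]
    set z := (1 + x) ^ (-(n : ℤ) - (j : ℤ)) with hz
    linear_combination (x ^ (j - 1) * x * z) * hcR

lemma P_shift (r n : ℕ) (x : ℝ) (k : ℤ) :
    (∏ i ∈ Finset.range r, ((k : ℝ) - i)) * P n k x
      = (∏ i ∈ Finset.range r, ((n : ℝ) + i)) * x ^ r * P (n + r) (k - r) x := by
  induction r with
  | zero => simp
  | succ r ih =>
    rw [Finset.prod_range_succ, Finset.prod_range_succ]
    have hstep := P_step (n + r) x (k - r)
    rw [show ((k - (r : ℤ) : ℤ) : ℝ) = (k : ℝ) - (r : ℝ) by push_cast; ring] at hstep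
    rw [show n + (r + 1) = n + r + 1 by omega,
      show k - ((r + 1 : ℕ) : ℤ) = k - r - 1 by push_cast; ring]
    push_cast at hstep ⊢
    linear_combination ((k : ℝ) - (r : ℝ)) * ih
      + (∏ i ∈ Finset.range r, ((n : ℝ) + i)) * x ^ r * hstep

lemma hasSum_P (m : ℕ) (hm : 1 ≤ m) (x : ℝ) (hx : 0 < x) :
    HasSum (fun k : ℕ => P m (k : ℤ) x) 1 := by
  have hx1 : (0 : ℝ) < 1 + x := by linarith
  have hq : ‖x / (1 + x)‖ < 1 := by
    rw [Real.norm_eq_abs, abs_of_pos (by positivity), div_lt_one hx1]; linarith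
  have h := (hasSum_choose_mul_geometric_of_norm_lt_one (𝕜 := ℝ) (m - 1) hq).mul_right
      ((1 + x) ^ (-(m : ℤ)))
  have hfe : (fun k : ℕ => P m (k : ℤ) x)
      = fun k : ℕ => (((k + (m - 1)).choose (m - 1) : ℝ) * (x / (1 + x)) ^ k)
          * (1 + x) ^ (-(m : ℤ)) := by
    funext k
    rw [P, if_neg (by omega), Int.toNat_natCast]
    have hcc : (m + k - 1).choose k = (k + (m - 1)).choose (m - 1) := by
      rw [show k + (m - 1) = m + k - 1 by omega]
      conv_lhs => rw [← Nat.choose_symm (show k ≤ m + k - 1 by omega)]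
      congr 1
      omega
    rw [hcc]
    have hzp : (1 + x) ^ (-(m : ℤ) - (k : ℤ))
        = ((1 + x) ^ k)⁻¹ * (1 + x) ^ (-(m : ℤ)) := by
      rw [sub_eq_add_neg, zpow_add₀ hx1.ne', mul_comm]
      congr 1
      rw [zpow_neg, zpow_natCast]
    rw [hzp, div_pow, div_eq_mul_inv]
    ring
  rw [hfe]
  have hv : (1 : ℝ) = 1 / (1 - x / (1 + x)) ^ (m - 1 + 1) * (1 + x) ^ (-(m : ℤ)) := by
    rw [show (1 : ℝ) - x / (1 + x) = (1 + x)⁻¹ by field_simp; ring,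
      show m - 1 + 1 = m by omega, zpow_neg, zpow_natCast, inv_pow, one_div, inv_inv]
    exact (mul_inv_cancel₀ (pow_ne_zero m hx1.ne')).symm
  rw [← hv] at h
  exact h

lemma hasSum_P_shift (m r : ℕ) (hm : 1 ≤ m) (x : ℝ) (hx : 0 < x) :
    HasSum (fun k : ℕ => P m ((k : ℤ) - r) x) 1 := by
  have h2 : HasSum (fun k : ℕ => P m (((k + r : ℕ) : ℤ) - r) x) 1 := by
    have h := hasSum_P m hm x hx
    have heq : (fun k : ℕ => P m (((k + r : ℕ) : ℤ) - r) x) = fun k : ℕ => P m (k : ℤ) x := by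
      funext k; congr 1; push_cast; ring
    rw [heq]; exact h
  have h3 := (hasSum_nat_add_iff (f := fun k : ℕ => P m ((k : ℤ) - r) x) r).mp h2
  have hz : ∑ i ∈ Finset.range r, P m ((i : ℤ) - r) x = 0 := by
    apply Finset.sum_eq_zero
    intro i hi
    rw [Finset.mem_range] at hi
    rw [P, if_pos (by omega)]
  rw [hz, add_zero] at h3
  exact h3

lemma hasSum_moment (n : ℕ) (hn : 1 ≤ n) (x : ℝ) (hx : 0 < x) (r : ℕ) :
    HasSum (fun k : ℕ => (∏ i ∈ Finset.range r, ((k : ℝ) - i)) * P n (k : ℤ) x)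
      ((∏ i ∈ Finset.range r, ((n : ℝ) + i)) * x ^ r) := by
  have h := (hasSum_P_shift (n + r) r (by omega) x hx).mul_left
      ((∏ i ∈ Finset.range r, ((n : ℝ) + i)) * x ^ r)
  rw [mul_one] at h
  have hfe : (fun k : ℕ => (∏ i ∈ Finset.range r, ((k : ℝ) - i)) * P n (k : ℤ) x)
      = fun k : ℕ => ((∏ i ∈ Finset.range r, ((n : ℝ) + i)) * x ^ r)
          * P (n + r) ((k : ℤ) - r) x := by
    funext k
    have hp := P_shift r n x (k : ℤ)
    push_cast at hp ⊢
    exact hp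
  rw [hfe]
  exact h

theorem Phi_eval (n : ℕ) (hn : 1 ≤ n) (x : ℝ) (hx : 0 < x) (α : ℝ) :
    ∑' k : ℕ, (α - T n (k : ℤ) x / (n : ℝ)) ^ 2 * P n (k : ℤ) x
      = α ^ 2 + 2 + 2 / (n : ℝ) := by
  have hx1 : (0 : ℝ) < 1 + x := by linarith
  have hxne : x ≠ 0 := hx.ne'
  have hx1ne : (1 : ℝ) + x ≠ 0 := hx1.ne'
  have hnne : (n : ℝ) ≠ 0 := Nat.cast_ne_zero.mpr (by omega)
  have h0 := (hasSum_moment n hn x hx 0).mul_left ((n : ℝ) ^ 2 * x ^ 2 * (α * (1 + x) - ((n : ℝ) + 1) * x) ^ 2 / ((n : ℝ) ^ 2 * x ^ 2 * (1 + x) ^ 2))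
  have h1 := (hasSum_moment n hn x hx 1).mul_left (((2 * (n : ℝ) + 2) ^ 2 * x ^ 2 + 2 * (α * (1 + x) - ((n : ℝ) + 1) * x) * (2 * (n : ℝ) + 2) * (n : ℝ) * x ^ 2) / ((n : ℝ) ^ 2 * x ^ 2 * (1 + x) ^ 2))
  have h2 := (hasSum_moment n hn x hx 2).mul_left ((2 + (2 * (n : ℝ) + 2) ^ 2 * x ^ 2 - 2 * (α * (1 + x) - ((n : ℝ) + 1) * x) * (n : ℝ) * x - 4 * (2 * (n : ℝ) + 2) * x) / ((n : ℝ) ^ 2 * x ^ 2 * (1 + x) ^ 2))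
  have h3 := (hasSum_moment n hn x hx 3).mul_left ((4 - 2 * (2 * (n : ℝ) + 2) * x) / ((n : ℝ) ^ 2 * x ^ 2 * (1 + x) ^ 2))
  have h4 := (hasSum_moment n hn x hx 4).mul_left (1 / ((n : ℝ) ^ 2 * x ^ 2 * (1 + x) ^ 2))
  have hc := (((h0.add h1).add h2).add h3).add h4
  have hfe : (fun k : ℕ => (α - T n (k : ℤ) x / (n : ℝ)) ^ 2 * P n (k : ℤ) x)
      = fun k : ℕ => (((((n : ℝ) ^ 2 * x ^ 2 * (α * (1 + x) - ((n : ℝ) + 1) * x) ^ 2 / ((n : ℝ) ^ 2 * x ^ 2 * (1 + x) ^ 2)) * ((∏ i ∈ Finset.range 0, ((k : ℝ) - i)) * P n (k : ℤ) x)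
          + (((2 * (n : ℝ) + 2) ^ 2 * x ^ 2 + 2 * (α * (1 + x) - ((n : ℝ) + 1) * x) * (2 * (n : ℝ) + 2) * (n : ℝ) * x ^ 2) / ((n : ℝ) ^ 2 * x ^ 2 * (1 + x) ^ 2)) * ((∏ i ∈ Finset.range 1, ((k : ℝ) - i)) * P n (k : ℤ) x))
          + ((2 + (2 * (n : ℝ) + 2) ^ 2 * x ^ 2 - 2 * (α * (1 + x) - ((n : ℝ) + 1) * x) * (n : ℝ) * x - 4 * (2 * (n : ℝ) + 2) * x) / ((n : ℝ) ^ 2 * x ^ 2 * (1 + x) ^ 2)) * ((∏ i ∈ Finset.range 2, ((k : ℝ) - i)) * P n (k : ℤ) x))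
          + ((4 - 2 * (2 * (n : ℝ) + 2) * x) / ((n : ℝ) ^ 2 * x ^ 2 * (1 + x) ^ 2)) * ((∏ i ∈ Finset.range 3, ((k : ℝ) - i)) * P n (k : ℤ) x))
          + (1 / ((n : ℝ) ^ 2 * x ^ 2 * (1 + x) ^ 2)) * ((∏ i ∈ Finset.range 4, ((k : ℝ) - i)) * P n (k : ℤ) x) := by
    funext k
    simp only [T, Finset.prod_range_succ, Finset.prod_range_zero]
    push_cast
    field_simp
    ring
  rw [hfe, hc.tsum_eq]
  simp only [Finset.prod_range_succ, Finset.prod_range_zero]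
  push_cast
  field_simp
  ring
end

section
/- Let n ≥ 1 and k ≥ 0 be integers and x > 0. Then T_{n+1,k−1}(x)·P_{n+1,k−1}(x) + T_{n+1,k}(x)·P_{n+1,k}(x) = (k−2)(n+k−1)·P_{n+1,k−2}(x) − (k−1)(n+k)·P_{n+1,k−1}(x) − k(n+k+1)·P_{n+1,k}(x) + (k+1)(n+k+2)·P_{n+1,k+1}(x), where terms with negative second index are interpreted as 0. -/
open MeasureTheory Filter Set

lemma L1 (m : ℕ) (hm : 1 ≤ m) (k : ℕ) (x : ℝ) (hx : 0 < x) :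
    (k:ℝ) * ((1+x)/x) * P m (k:ℤ) x = ((m:ℝ)+(k:ℝ)-1) * P m ((k:ℤ)-1) x := by
  have h1x : (0:ℝ) < 1 + x := by linarith
  cases k with
  | zero => simp [P]
  | succ j =>
    have e1 : ((j+1:ℕ):ℤ) = (j:ℤ)+1 := by push_cast; ring
    simp only [P, e1]
    rw [if_neg (by omega), if_neg (by omega)]
    have t1 : ((j:ℤ)+1).toNat = j+1 := by omega
    have t2 : ((j:ℤ)+1-1).toNat = j := by omega
    rw [t1, t2]
    have hc : m + (j+1) - 1 = m + j := by omega
    rw [hc]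
    have hb : ((j:ℝ)+1) * ((m + j).choose (j+1) : ℝ)
        = ((m:ℝ)+(j:ℝ)) * ((m + j - 1).choose j : ℝ) := by
      have h := Nat.add_one_mul_choose_eq (m+j-1) j
      have hm' : m + j - 1 + 1 = m + j := by omega
      rw [hm'] at h
      have := congrArg (Nat.cast (R := ℝ)) h
      push_cast at this ⊢
      linarith
    have epow1 : (-(m:ℤ)-((j:ℤ)+1)) = -(m:ℤ)-(j:ℤ)-1 := by ring
    have epow2 : (-(m:ℤ)-((j:ℤ)+1-1)) = (-(m:ℤ)-(j:ℤ)-1) + 1 := by ring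
    rw [epow1, epow2, zpow_add_one₀ (ne_of_gt h1x)]
    push_cast
    field_simp
    linear_combination (x^(j+1)) * hb

lemma L2 (m : ℕ) (hm : 1 ≤ m) (k : ℕ) (x : ℝ) (hx : 0 < x) :
    ((m:ℝ)+(k:ℝ)) * (x/(1+x)) * P m (k:ℤ) x = ((k:ℝ)+1) * P m ((k:ℤ)+1) x := by
  have h1x : (0:ℝ) < 1 + x := by linarith
  simp only [P]
  rw [if_neg (by omega), if_neg (by omega)]
  have t1 : ((k:ℤ)).toNat = k := by omega
  have t2 : ((k:ℤ)+1).toNat = k+1 := by omega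
  rw [t1, t2]
  have hc : m + (k+1) - 1 = m + k := by omega
  rw [hc]
  have hb : ((k:ℝ)+1) * ((m + k).choose (k+1) : ℝ)
      = ((m:ℝ)+(k:ℝ)) * ((m + k - 1).choose k : ℝ) := by
    have h := Nat.add_one_mul_choose_eq (m+k-1) k
    have hm' : m + k - 1 + 1 = m + k := by omega
    rw [hm'] at h
    have := congrArg (Nat.cast (R := ℝ)) h
    push_cast at this ⊢
    linarith
  have epow1 : (-(m:ℤ)-((k:ℤ)+1)) = -(m:ℤ)-(k:ℤ)-1 := by ring
  have epow2 : (-(m:ℤ)-(k:ℤ)) = (-(m:ℤ)-(k:ℤ)-1) + 1 := by ring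
  rw [epow1, epow2, zpow_add_one₀ (ne_of_gt h1x)]
  field_simp
  rw [show (-(m:ℤ)-(k:ℤ)-1+1-1) = -(m:ℤ)-(k:ℤ)-1 by ring]
  linear_combination (-1 * (1+x)^(-(m:ℤ)-(k:ℤ)-1) * x^(k+1)) * hb


lemma LA (m : ℕ) (hm : 1 ≤ m) (k : ℕ) (x : ℝ) (hx : 0 < x) :
    T m (k:ℤ) x * P m (k:ℤ) x
      = ((k:ℝ)-1)*((m:ℝ)+(k:ℝ)-1) * P m ((k:ℤ)-1) x
        - 2*(k:ℝ)*((m:ℝ)+(k:ℝ)) * P m (k:ℤ) x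
        + ((k:ℝ)+1)*((m:ℝ)+(k:ℝ)+1) * P m ((k:ℤ)+1) x := by
  have h1 := L1 m hm k x hx
  have h2 := L2 m hm k x hx
  have h1x : (0:ℝ) < 1 + x := by linarith
  have hx0 : x ≠ 0 := ne_of_gt hx
  have h1x0 : (1:ℝ) + x ≠ 0 := ne_of_gt h1x
  rw [T]
  field_simp at h1 h2 ⊢
  push_cast
  linear_combination (((k:ℝ)-1)*(1+x)) * h1 + (((m:ℝ)+(k:ℝ)+1)*x) * h2

theorem TP_sum_identity (n : ℕ) (hn : 1 ≤ n) (k : ℕ) (x : ℝ) (hx : 0 < x) :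
    T (n + 1) ((k : ℤ) - 1) x * P (n + 1) ((k : ℤ) - 1) x
        + T (n + 1) (k : ℤ) x * P (n + 1) (k : ℤ) x =
      ((k : ℝ) - 2) * ((n : ℝ) + (k : ℝ) - 1) * P (n + 1) ((k : ℤ) - 2) x
        - ((k : ℝ) - 1) * ((n : ℝ) + (k : ℝ)) * P (n + 1) ((k : ℤ) - 1) x
        - (k : ℝ) * ((n : ℝ) + (k : ℝ) + 1) * P (n + 1) (k : ℤ) x
        + ((k : ℝ) + 1) * ((n : ℝ) + (k : ℝ) + 2) * P (n + 1) ((k : ℤ) + 1) x := by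
  have hm : 1 ≤ n + 1 := by omega
  cases k with
  | zero =>
    have h := LA (n+1) hm 0 x hx
    have hP1 : P (n+1) (-1) x = 0 := by norm_num [P]
    have hP2 : P (n+1) (-2) x = 0 := by norm_num [P]
    push_cast at h ⊢
    rw [hP1] at h ⊢
    rw [hP2]
    linear_combination h
  | succ j =>
    have h1 := LA (n+1) hm j x hx
    have h2 := LA (n+1) hm (j+1) x hx
    have e2 : ((j:ℤ)+1)-1 = (j:ℤ) := by ring
    have e3 : ((j:ℤ)+1)-2 = (j:ℤ)-1 := by ring
    push_cast at h1 h2 ⊢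
    rw [e2, e3] at *
    linear_combination h1 + h2
end

section
/- Let n ≥ 1 and k ≥ 0 be integers and x > 0. Then (ψ(x)/n)·T''_{n,k}(x)·P_{n,k}(x) = 2(n+k−1)·P_{n+1,k−2}(x) − 2(k+1)·P_{n+1,k+1}(x), where T''_{n,k}(x) = 2k(k−1)/x³ − 2(n+k)(n+k+1)/(1+x)³ and terms with negative second index are interpreted as 0. -/
open MeasureTheory Filter Set

lemma r2 (p k : ℕ) :
    ((p:ℝ)+1+k)*((p:ℝ)+1+k+1)*(Nat.choose (p+k) k : ℝ)
      = ((p:ℝ)+1)*((k:ℝ)+1)*(Nat.choose (p+k+2) (k+1) : ℝ) := by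
  have h1 := Nat.add_one_mul_choose_eq (p+k) k
  have h2 := Nat.choose_succ_right_eq (p+k+1) k
  have h3 := Nat.add_one_mul_choose_eq (p+k+1) k
  have e2 : p + k + 1 - k = p + 1 := by omega
  rw [e2] at h2
  have h1' : ((p:ℝ)+k+1) * (Nat.choose (p+k) k : ℝ) = (Nat.choose (p+k+1) (k+1) : ℝ) * ((k:ℝ)+1) := by
    exact_mod_cast congrArg (Nat.cast : ℕ → ℝ) h1
  have h2' : (Nat.choose (p+k+1) (k+1) : ℝ) * ((k:ℝ)+1) = (Nat.choose (p+k+1) k : ℝ) * ((p:ℝ)+1) := by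
    exact_mod_cast congrArg (Nat.cast : ℕ → ℝ) h2
  have h3' : ((p:ℝ)+k+1+1) * (Nat.choose (p+k+1) k : ℝ) = (Nat.choose (p+k+2) (k+1) : ℝ) * ((k:ℝ)+1) := by
    have : p+k+1+1 = p+k+2 := by omega
    rw [this] at h3
    exact_mod_cast congrArg (Nat.cast : ℕ → ℝ) h3
  nlinarith [h1', h2', h3']

lemma r1 (n m : ℕ) :
    ((m:ℝ)+2)*((m:ℝ)+1)*(Nat.choose (n+m+1) (m+2) : ℝ)
      = (n:ℝ)*((n:ℝ)+(m:ℝ)+1)*(Nat.choose (n+m) m : ℝ) := by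
  have h1 := Nat.add_one_mul_choose_eq (n+m) (m+1)
  have h2 := Nat.choose_succ_right_eq (n+m) m
  have e2 : n + m - m = n := by omega
  rw [e2] at h2
  have h1' : ((n:ℝ)+m+1) * (Nat.choose (n+m) (m+1) : ℝ) = (Nat.choose (n+m+1) (m+2) : ℝ) * ((m:ℝ)+2) := by
    exact_mod_cast congrArg (Nat.cast : ℕ → ℝ) h1
  have h2' : (Nat.choose (n+m) (m+1) : ℝ) * ((m:ℝ)+1) = (Nat.choose (n+m) m : ℝ) * (n:ℝ) := by
    exact_mod_cast congrArg (Nat.cast : ℕ → ℝ) h2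
  nlinarith [h1', h2']

lemma P_eq (n k : ℕ) (x : ℝ) (hx : 0 < x) :
    P n (k:ℤ) x = (Nat.choose (n+k-1) k : ℝ) * x^k * ((1+x)^(n+k))⁻¹ := by
  have hx1 : (1:ℝ)+x ≠ 0 := by linarith
  rw [P, if_neg (by omega)]
  have e : -(n:ℤ) - (k:ℤ) = -((n+k:ℕ):ℤ) := by push_cast; ring
  rw [e, zpow_neg, zpow_natCast]
  norm_num

theorem T''_P_identity (n : ℕ) (hn : 1 ≤ n) (k : ℕ) (x : ℝ) (hx : 0 < x) :
    (psi x / (n : ℝ))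
        * (2 * (k : ℝ) * ((k : ℝ) - 1) / x ^ 3
            - 2 * ((n : ℝ) + (k : ℝ)) * ((n : ℝ) + (k : ℝ) + 1) / (1 + x) ^ 3)
        * P n (k : ℤ) x =
      2 * ((n : ℝ) + (k : ℝ) - 1) * P (n + 1) ((k : ℤ) - 2) x
        - 2 * ((k : ℝ) + 1) * P (n + 1) ((k : ℤ) + 1) x := by
  obtain ⟨p, rfl⟩ : ∃ p, n = p + 1 := ⟨n - 1, by omega⟩
  have hx1 : (0:ℝ) < 1 + x := by linarith
  have hx1' : (1:ℝ) + x ≠ 0 := ne_of_gt hx1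
  have hxn : x ≠ 0 := ne_of_gt hx
  have hp1 : ((p:ℝ)+1) ≠ 0 := by positivity
  have key2 : ∀ k : ℕ, psi x / ((p:ℝ)+1) * (2 * ((p:ℝ)+1+k) * (((p:ℝ)+1+k)+1) / (1+x)^3) * P (p+1) (k:ℤ) x
      = 2 * ((k:ℝ)+1) * P (p+1+1) ((k:ℤ)+1) x := by
    intro k
    have e1 : (k:ℤ)+1 = ((k+1:ℕ):ℤ) := by push_cast; ring
    rw [e1, P_eq _ _ _ hx, P_eq _ _ _ hx]
    have e2 : p+1+k-1 = p+k := by omega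
    have e3 : p+1+1+(k+1)-1 = p+k+2 := by omega
    have e4 : (1+x)^(p+1+k) = (1+x)^(p+k)*(1+x) := by rw [← pow_succ]; congr 1; omega
    have e5 : (1+x)^(p+1+1+(k+1)) = (1+x)^(p+k)*(1+x)^3 := by rw [← pow_add]; congr 1; omega
    rw [e2, e3, e4, e5, psi]
    have h := r2 p k
    generalize (Nat.choose (p+k) k : ℝ) = c0 at h ⊢
    generalize (Nat.choose (p+k+2) (k+1) : ℝ) = c2 at h ⊢
    have hu : (1+x)^(p+k) ≠ 0 := pow_ne_zero _ hx1'
    generalize (1+x)^(p+k) = u at hu ⊢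
    field_simp
    linear_combination (x * x^k) * h
  have hk : k = 0 ∨ k = 1 ∨ ∃ m, k = m + 2 := by
    rcases k with _ | _ | m
    exacts [Or.inl rfl, Or.inr (Or.inl rfl), Or.inr (Or.inr ⟨m, rfl⟩)]
  rcases hk with rfl | rfl | ⟨m, rfl⟩
  · have h0 : P (p+1+1) (((0:ℕ):ℤ)-2) x = 0 := by norm_num [P]
    have h2 := key2 0
    rw [h0]
    push_cast at h2 ⊢
    linear_combination -h2
  · have h0 : P (p+1+1) (((1:ℕ):ℤ)-2) x = 0 := by norm_num [P]
    have h2 := key2 1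
    rw [h0]
    push_cast at h2 ⊢
    linear_combination -h2
  · -- k = m + 2
    have key1 : psi x / ((p:ℝ)+1) * (2 * ((m:ℝ)+2) * ((m:ℝ)+1) / x^3) * P (p+1) ((m+2:ℕ):ℤ) x
        = 2 * (((p:ℝ)+1) + ((m:ℝ)+2) - 1) * P (p+1+1) (m:ℤ) x := by
      rw [P_eq _ _ _ hx, P_eq _ _ _ hx]
      have e2 : p+1+(m+2)-1 = p+1+m+1 := by omega
      have e3 : p+1+1+m-1 = p+1+m := by omega
      have e4 : (1+x)^(p+1+(m+2)) = (1+x)^(p+1+1+m)*(1+x) := by rw [← pow_succ]; congr 1; omega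
      rw [e2, e3, e4, psi]
      have h := r1 (p+1) m
      push_cast at h
      generalize (Nat.choose (p+1+m+1) (m+2) : ℝ) = c0 at h ⊢
      generalize (Nat.choose (p+1+m) m : ℝ) = c1 at h ⊢
      have hu : (1+x)^(p+1+1+m) ≠ 0 := pow_ne_zero _ hx1'
      generalize (1+x)^(p+1+1+m) = u at hu ⊢
      field_simp
      linear_combination (x^2 * x^m) * h
    have e6 : ((m+2:ℕ):ℤ) - 2 = (m:ℤ) := by push_cast; ring
    have h1 := key1
    have h2 := key2 (m+2)
    rw [e6]
    push_cast at h1 h2 ⊢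
    linear_combination h1 - h2
end
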